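/- Let q be an invertible element of a field of characteristic zero with q^2 ≠ 1. For positive integers m, k with 1 ≤ k ≤ m-1 define b^{(m)}_k = (-1)^{m-1} q^{-2(k-1)} (q^2 - q^{-2}), and let [m]_q = (q^m - q^{-m})/(q - q^{-1}). Then for all integers n > r ≥ 1: (-1)^{n-r} · ( b^{(n)}_r + ((q-q^{-1})/n)·(-1)^n [2r]_q + ((q-q^{-1})/n)·Σ_{s=1}^{r-1} (-1)^s [2s]_q b^{(n-s)}_{r-s} ) + ((q-q^{-1})/n)·(n-r)·(-1)^r q^{-2(r-1)}(q^2-q^{-2})/(q-q^{-1}) = 0. -/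

import Mathlib

open Finset

private lemma geomP {K : Type*} [Field K] (q : K) (r' : ℕ) :
    (q ^ 4 - 1) * ((∑ s ∈ Icc 1 r', q ^ (4 * s)) + 1) = q ^ (4 * r') * q ^ 4 - 1 := by
  induction r' with
  | zero => simp
  | succ m ih =>
    rw [Finset.sum_Icc_succ_top (by omega)]
    linear_combination ih

set_option maxHeartbeats 1000000 in
/-- Vanishing of the scalar combination of the coefficients b^{(m)}_k =
(-1)^{m-1} q^{-2(k-1)} (q² - q⁻²) appearing in the proof of Lemma 3.11. -/
theorem b_coefficient_cancellation {K : Type*} [Field K] [CharZero K] (q : K) (hq : q ≠ 0)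
    (h2 : q ^ 2 ≠ 1) (n r : ℕ) (hr : 1 ≤ r) (hnr : r < n) :
    (-1 : K) ^ (n - r) *
        (((-1 : K) ^ (n - 1) * q⁻¹ ^ (2 * (r - 1)) * (q ^ 2 - q⁻¹ ^ 2)) +
          ((q - q⁻¹) / (n : K)) * (-1 : K) ^ n *
            ((q ^ (2 * r) - q⁻¹ ^ (2 * r)) / (q - q⁻¹)) +
          ((q - q⁻¹) / (n : K)) *
            ∑ s ∈ Finset.Icc 1 (r - 1),
              (-1 : K) ^ s * ((q ^ (2 * s) - q⁻¹ ^ (2 * s)) / (q - q⁻¹)) *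
                ((-1 : K) ^ (n - s - 1) * q⁻¹ ^ (2 * (r - s - 1)) * (q ^ 2 - q⁻¹ ^ 2))) +
      ((q - q⁻¹) / (n : K)) * ((n : K) - (r : K)) *
        ((-1 : K) ^ r * q⁻¹ ^ (2 * (r - 1)) * (q ^ 2 - q⁻¹ ^ 2) / (q - q⁻¹)) = 0 := by
  obtain ⟨r', rfl⟩ : ∃ r', r = r' + 1 := ⟨r - 1, by omega⟩
  obtain ⟨k', rfl⟩ : ∃ k', n = r' + 1 + (k' + 1) := ⟨n - r' - 2, by omega⟩
  have hd : q - q⁻¹ ≠ 0 := by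
    rw [sub_ne_zero]
    intro h
    apply h2
    rw [sq]
    nth_rewrite 2 [h]
    exact mul_inv_cancel₀ hq
  have hN : ((r' : K) + 1 + ((k' : K) + 1)) ≠ 0 := by
    have h := Nat.cast_ne_zero (R := K).mpr (show r' + 1 + (k' + 1) ≠ 0 by omega)
    push_cast at h
    exact h
  rw [show r' + 1 + (k' + 1) - (r' + 1) = k' + 1 from by omega,
    show r' + 1 + (k' + 1) - 1 = r' + k' + 1 from by omega,
    show r' + 1 - 1 = r' from by omega]
  have hsum : ∑ s ∈ Finset.Icc 1 r',
      (-1 : K) ^ s * ((q ^ (2 * s) - q⁻¹ ^ (2 * s)) / (q - q⁻¹)) *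
        ((-1 : K) ^ (r' + 1 + (k' + 1) - s - 1) * q⁻¹ ^ (2 * (r' + 1 - s - 1)) *
          (q ^ 2 - q⁻¹ ^ 2)) =
      ((-1 : K) ^ (r' + k' + 1) * (q ^ 2 - q⁻¹ ^ 2) / (q - q⁻¹) * q⁻¹ ^ (2 * r')) *
        ((∑ s ∈ Icc 1 r', q ^ (4 * s)) - (r' : K)) := by
    have h1 : ∀ s ∈ Icc 1 r',
        (-1 : K) ^ s * ((q ^ (2 * s) - q⁻¹ ^ (2 * s)) / (q - q⁻¹)) *
          ((-1 : K) ^ (r' + 1 + (k' + 1) - s - 1) * q⁻¹ ^ (2 * (r' + 1 - s - 1)) *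
            (q ^ 2 - q⁻¹ ^ 2)) =
        ((-1 : K) ^ (r' + k' + 1) * (q ^ 2 - q⁻¹ ^ 2) / (q - q⁻¹) * q⁻¹ ^ (2 * r')) *
          (q ^ (4 * s) - 1) := by
      intro s hs
      simp only [mem_Icc] at hs
      obtain ⟨m, rfl⟩ : ∃ m, r' = s + m := ⟨r' - s, by omega⟩
      rw [show s + m + 1 + (k' + 1) - s - 1 = m + k' + 1 from by omega,
        show s + m + 1 - s - 1 = m from by omega]
      simp only [inv_pow]
      field_simp
      ring
    rw [Finset.sum_congr rfl h1, ← Finset.mul_sum, Finset.sum_sub_distrib,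
      Finset.sum_const, Nat.card_Icc]
    simp
  rw [hsum]
  have keyP := geomP q r'
  have key : (q ^ 2 - q⁻¹ ^ 2) * ((∑ s ∈ Icc 1 r', q ^ (4 * s)) + 1) =
      q ^ (2 * r') * (q ^ (2 * (r' + 1)) - q⁻¹ ^ (2 * (r' + 1))) := by
    have h0 : (q ^ 2 - q⁻¹ ^ 2) = q⁻¹ ^ 2 * (q ^ 4 - 1) := by
      field_simp
    rw [h0, mul_assoc, keyP]
    simp only [inv_pow]
    field_simp
    ring
  set p := q⁻¹ with hp
  have hqp : q * p = 1 := mul_inv_cancel₀ hq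
  have hu : ∀ k : ℕ, q ^ k * p ^ k = 1 := fun k => by rw [← mul_pow, hqp, one_pow]
  set A := ∑ s ∈ Icc 1 r', q ^ (4 * s) with hA
  push_cast
  field_simp [hd, hN]
  have hu2 : (-1 : K) ^ k' * (-1 : K) ^ k' = 1 := by
    rw [← pow_add]
    exact Even.neg_one_pow ⟨k', rfl⟩
  linear_combination ((-1 : K) ^ r' *
      (p ^ (2 * r') * (q ^ 2 - p ^ 2) * ((r' : K) + 1 + ((k' : K) + 1)) -
        (q ^ (2 * (r' + 1)) - p ^ (2 * (r' + 1))) +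
        p ^ (2 * r') * (q ^ 2 - p ^ 2) * (A - (r' : K)))) * hu2 +
    ((-1 : K) ^ r' * p ^ (2 * r')) * key +
    ((-1 : K) ^ r' * (q ^ (2 * (r' + 1)) - p ^ (2 * (r' + 1)))) * hu (2 * r')
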